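/- arXiv:1812.11363 — 3 statements merged into one kernel-verified Lean document; each statement's English description precedes it below -/
import Mathlib

section
/- Let k be a field of characteristic ≠ 2, L/k a quadratic Galois extension with Galois group generated by σ, and X ⊂ P⁴ the zero set of a homogeneous cubic polynomial F with coefficients in k. If X has a point with coordinates in L, then X has a point with coordinates in k. -/
open MvPolynomial

private lemma cubic_expand {R : Type*} [CommRing R] {F : MvPolynomial (Fin 5) R}
    (hF : F.IsHomogeneous 3) (u v : Fin 5 → R) :
    ∃ a b c d : R, ∀ t s : R,
      eval (fun i => t * u i + s * v i) F
        = a * t ^ 3 + b * (t ^ 2 * s) + c * (t * s ^ 2) + d * s ^ 3 := by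
  classical
  set G : MvPolynomial (Fin 2) R :=
    eval₂ C (fun i => C (u i) * X 0 + C (v i) * X 1) F with hGdef
  have hG : G.IsHomogeneous 3 := by
    have := hF.eval₂ (C : R →+* MvPolynomial (Fin 2) R)
      (fun i => C (u i) * X 0 + C (v i) * X 1)
      (fun r => isHomogeneous_C _ _)
      (fun i => ((isHomogeneous_X _ _).C_mul _).add ((isHomogeneous_X _ _).C_mul _))
    simpa using this
  set e : ℕ → ℕ → (Fin 2 →₀ ℕ) := fun m n => Finsupp.single 0 m + Finsupp.single 1 n with he
  have he_app0 : ∀ m n, (e m n) 0 = m := by intro m n; simp [he, Finsupp.single_apply]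
  have he_app1 : ∀ m n, (e m n) 1 = n := by intro m n; simp [he, Finsupp.single_apply]
  refine ⟨coeff (e 3 0) G, coeff (e 2 1) G, coeff (e 1 2) G, coeff (e 0 3) G, fun t s => ?_⟩
  have h1 : eval (fun i => t * u i + s * v i) F = eval ![t, s] G := by
    rw [hGdef, eval_eval₂]
    rw [show ((eval ![t,s]).comp (C : R →+* MvPolynomial (Fin 2) R)) = RingHom.id R by
      ext r; simp]
    rw [eval₂_id]
    exact congrArg (fun g => eval g F) (funext fun i => by simp [mul_comm])
  rw [h1, eval_eq']
  have hsub : G.support ⊆ {e 3 0, e 2 1, e 1 2, e 0 3} := by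
    intro d hd
    have h3 : d 0 + d 1 = 3 := by
      have h3 := hG (mem_support_iff.mp hd)
      rw [Finsupp.weight_apply, Finsupp.sum_fintype] at h3
      · simpa [Fin.sum_univ_two] using h3
      · intro; simp
    have hde : d = e (d 0) (d 1) := by
      ext j
      fin_cases j
      · simp [he_app0]
      · simp [he_app1]
    simp only [Finset.mem_insert, Finset.mem_singleton]
    have h0 : d 0 ≤ 3 := by omega
    interval_cases h : d 0 <;>
      [ (right; right; right); (right; right; left); (right; left); left ] <;>
      · rw [hde]
        congr 1 <;> omega
  rw [Finset.sum_subset hsub (fun d _ hd => by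
    rw [notMem_support_iff.mp hd, zero_mul])]
  have hne1 : e 3 0 ∉ ({e 2 1, e 1 2, e 0 3} : Finset (Fin 2 →₀ ℕ)) := by
    simp only [Finset.mem_insert, Finset.mem_singleton]
    push_neg
    refine ⟨?_, ?_, ?_⟩ <;> exact fun h => by
      have := congrArg (fun f => f 0) h; simp [he_app0] at this
  have hne2 : e 2 1 ∉ ({e 1 2, e 0 3} : Finset (Fin 2 →₀ ℕ)) := by
    simp only [Finset.mem_insert, Finset.mem_singleton]
    push_neg
    refine ⟨?_, ?_⟩ <;> exact fun h => by
      have := congrArg (fun f => f 0) h; simp [he_app0] at this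
  have hne3 : e 1 2 ∉ ({e 0 3} : Finset (Fin 2 →₀ ℕ)) := by
    simp only [Finset.mem_singleton]
    exact fun h => by
      have := congrArg (fun f => f 0) h; simp [he_app0] at this
  rw [show ({e 3 0, e 2 1, e 1 2, e 0 3} : Finset (Fin 2 →₀ ℕ))
      = insert (e 3 0) (insert (e 2 1) (insert (e 1 2) {e 0 3})) from rfl,
    Finset.sum_insert hne1, Finset.sum_insert hne2, Finset.sum_insert hne3,
    Finset.sum_singleton]
  have hprod : ∀ m n, (∏ j : Fin 2, (![t, s] j) ^ ((e m n) j)) = t ^ m * s ^ n := by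
    intro m n
    rw [Fin.prod_univ_two]
    simp [he_app0, he_app1]
  rw [hprod, hprod, hprod, hprod]
  ring

/-- If a cubic hypersurface in P⁴ over a field `k` of characteristic ≠ 2 has a
point over a quadratic Galois extension `L/k`, then it has a `k`-point. -/
theorem cubic_point_descends_quadratic_ext (k L : Type*) [Field k] [Field L]
    [Algebra k L] [IsGalois k L] (hchar : ringChar k ≠ 2)
    (hdim : Module.finrank k L = 2)
    (F : MvPolynomial (Fin 5) k) (hF : F.IsHomogeneous 3)
    (x : Fin 5 → L) (hx : x ≠ 0)
    (hxF : eval x (MvPolynomial.map (algebraMap k L) F) = 0) :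
    ∃ y : Fin 5 → k, y ≠ 0 ∧ eval y F = 0 := by
  classical
  have hfd : FiniteDimensional k L :=
    FiniteDimensional.of_finrank_pos (by rw [hdim]; norm_num)
  set φ := algebraMap k L with hφ
  have hinj : Function.Injective φ := φ.injective
  set FL := MvPolynomial.map φ F with hFL
  -- characteristic
  have h2k : (2 : k) ≠ 0 := Ring.two_ne_zero hchar
  have h2L : (2 : L) ≠ 0 := by
    intro h
    apply h2k
    apply hinj
    rw [map_ofNat, map_zero, h]
  -- the Galois group has order 2, with a unique nontrivial element σ
  have hcard : Nat.card (L ≃ₐ[k] L) = 2 := by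
    rw [IsGalois.card_aut_eq_finrank, hdim]
  obtain ⟨σ, hσ1, hσuniq⟩ := (Nat.card_eq_two_iff' (1 : L ≃ₐ[k] L)).mp hcard
  have hdich : ∀ τ : L ≃ₐ[k] L, τ = 1 ∨ τ = σ := fun τ =>
    or_iff_not_imp_left.mpr (hσuniq τ)
  have hσσ : ∀ a : L, σ (σ a) = a := by
    have hmul : σ * σ = 1 := by
      rcases hdich (σ * σ) with h | h
      · exact h
      · exact absurd (mul_right_cancel (a := σ) (by rw [h, one_mul])) hσ1
    intro a
    have := congrArg (fun τ : L ≃ₐ[k] L => τ a) hmul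
    simpa [AlgEquiv.mul_apply] using this
  -- elements fixed by σ come from k
  have hfix : ∀ a : L, σ a = a → ∃ b : k, φ b = a := by
    intro a ha
    have hmem : a ∈ IntermediateField.fixedField (⊤ : Subgroup (L ≃ₐ[k] L)) := by
      rintro ⟨g, -⟩
      rcases hdich g with rfl | rfl
      · simp [AlgEquiv.smul_def]
      · simpa [AlgEquiv.smul_def] using ha
    have htop : IntermediateField.fixedField (⊤ : Subgroup (L ≃ₐ[k] L)) = ⊥ :=
      ((IsGalois.tfae (F := k) (E := L)).out 0 1).mp (inferInstance : IsGalois k L)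
    rw [htop] at hmem
    obtain ⟨b, hb⟩ := IntermediateField.mem_bot.mp hmem
    exact ⟨b, hb⟩
  -- σ-equivariance of evaluation
  have hsig : ∀ w : Fin 5 → L, σ (eval w FL) = eval (fun i => σ (w i)) FL := by
    intro w
    have h := MvPolynomial.eval₂_comp_left (σ : L →+* L) φ w F
    rw [show ((σ : L →+* L).comp φ) = φ from RingHom.ext fun r => σ.commutes r] at h
    rw [hFL, eval_map, eval_map]
    exact h
  -- evaluation over k versus over L
  have halg : ∀ y : Fin 5 → k, φ (eval y F) = eval (fun i => φ (y i)) FL := by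
    intro y
    rw [hFL, eval_map]
    have := MvPolynomial.eval₂_comp_left φ (RingHom.id k) y F
    simpa [RingHom.comp_id, Function.comp_def] using this
  -- a nonzero coordinate of x
  obtain ⟨i0, hi0⟩ : ∃ i, x i ≠ 0 := by
    by_contra h
    push_neg at h
    exact hx (funext fun i => h i)
  -- an element δ with σ δ = -δ, δ ≠ 0
  obtain ⟨θ, hθ⟩ : ∃ θ : L, σ θ ≠ θ := by
    by_contra h
    push_neg at h
    exact hσ1 (AlgEquiv.ext fun a => (h a).trans (AlgEquiv.one_apply a).symm)
  set δ := θ - σ θ with hδdef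
  have hδσ : σ δ = -δ := by rw [hδdef, map_sub, hσσ]; ring
  have hδ0 : δ ≠ 0 := sub_ne_zero.mpr (Ne.symm hθ)
  -- the cubic expansion along the line through x and σ x
  obtain ⟨a, b, c, d, hexp0⟩ := cubic_expand (hF.map φ) x (fun i => σ (x i))
  have hexp : ∀ t s : L,
      eval (fun i => t * x i + s * σ (x i)) FL
        = a * t ^ 3 + b * (t ^ 2 * s) + c * (t * s ^ 2) + d * s ^ 3 := fun t s => hexp0 t s
  have hsym : ∀ t s : L,
      σ (eval (fun i => t * x i + s * σ (x i)) FL)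
        = eval (fun i => σ s * x i + σ t * σ (x i)) FL := by
    intro t s
    rw [hsig]
    exact congrArg (fun w => eval w FL)
      (funext fun i => by rw [map_add, map_mul, map_mul, hσσ]; ring)
  have hxarg : (fun i => (1:L) * x i + 0 * σ (x i)) = x := funext fun i => by ring
  have ha : a = 0 := by
    have h := hexp 1 0
    rw [hxarg, hxF] at h
    simpa using h.symm
  have hd0 : d = 0 := by
    have h := hsym 1 0
    simp only [map_zero, map_one] at h
    rw [hxarg, hxF, map_zero, hexp 0 1] at h
    simpa using h.symm
  -- σ b = c
  have hval1 : eval (fun i => (1:L) * x i + 1 * σ (x i)) FL = b + c := by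
    rw [hexp, ha, hd0]; ring
  have hval2 : eval (fun i => (1:L) * x i + (-1) * σ (x i)) FL = c - b := by
    rw [hexp, ha, hd0]; ring
  have hval3 : eval (fun i => (-1:L) * x i + 1 * σ (x i)) FL = b - c := by
    rw [hexp, ha, hd0]; ring
  have hu : σ (b + c) = b + c := by
    have h := hsym 1 1
    simp only [map_one] at h
    rw [hval1] at h
    exact h
  have hw : σ (c - b) = b - c := by
    have h := hsym 1 (-1)
    simp only [map_one, map_neg] at h
    rw [hval2, hval3] at h
    exact h
  have hσb : σ b = c := by
    have h2 : (2 : L) * σ b = 2 * c := by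
      calc (2 : L) * σ b = σ (2 * b) := by rw [map_mul, map_ofNat]
        _ = σ ((b + c) - (c - b)) := by ring_nf
        _ = σ (b + c) - σ (c - b) := by rw [map_sub]
        _ = (b + c) - (b - c) := by rw [hu, hw]
        _ = 2 * c := by ring
    exact mul_left_cancel₀ h2L h2
  have hσc : σ c = b := by rw [← hσb, hσσ]
  by_cases hA : ∃ μ : L, ∀ i, σ (x i) = μ * x i
  · -- x and σ x are proportional
    obtain ⟨μ, hμ⟩ := hA
    by_cases hμ1 : 1 + μ = 0
    · -- use δ * (x - σ x) = 2 δ x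
      have hfixz : ∀ i, σ (δ * (x i - σ (x i))) = δ * (x i - σ (x i)) := by
        intro i
        rw [map_mul, hδσ, map_sub, hσσ]
        ring
      choose y hy using fun i => hfix _ (hfixz i)
      have hμval : μ = -1 := by linear_combination hμ1
      refine ⟨y, ?_, ?_⟩
      · intro h0
        have h1 : φ (y i0) = 0 := by rw [h0]; simp
        rw [hy i0, hμ i0, hμval] at h1
        have : δ * (2 * x i0) = 0 := by rw [← h1]; ring
        exact (mul_ne_zero hδ0 (mul_ne_zero h2L hi0)) this
      · apply hinj
        rw [map_zero, halg]
        have harg : (fun i => φ (y i)) = fun i => (2 * δ) * x i + 0 * σ (x i) :=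
          funext fun i => by rw [hy i, hμ i, hμval]; ring
        rw [harg, hexp, ha, hd0]
        ring
    · -- use x + σ x = (1 + μ) x
      have hfixz : ∀ i, σ (x i + σ (x i)) = x i + σ (x i) := by
        intro i
        rw [map_add, hσσ]
        ring
      choose y hy using fun i => hfix _ (hfixz i)
      refine ⟨y, ?_, ?_⟩
      · intro h0
        have h1 : φ (y i0) = 0 := by rw [h0]; simp
        rw [hy i0, hμ i0] at h1
        have : (1 + μ) * x i0 = 0 := by rw [← h1]; ring
        exact (mul_ne_zero hμ1 hi0) this
      · apply hinj
        rw [map_zero, halg]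
        have harg : (fun i => φ (y i)) = fun i => (1 + μ) * x i + 0 * σ (x i) :=
          funext fun i => by rw [hy i, hμ i]; ring
        rw [harg, hexp, ha, hd0]
        ring
  · push_neg at hA
    by_cases hb : b = 0
    · -- the line lies in the cubic; take the k-rational point λ x + σλ σx
      have hc : c = 0 := by rw [← hσb, hb, map_zero]
      set lam := (x i0)⁻¹ with hlam
      have hfixz : ∀ i, σ (lam * x i + σ lam * σ (x i)) = lam * x i + σ lam * σ (x i) := by
        intro i
        rw [map_add, map_mul, map_mul, hσσ, hσσ]
        ring
      choose y hy using fun i => hfix _ (hfixz i)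
      refine ⟨y, ?_, ?_⟩
      · intro h0
        have h1 : φ (y i0) = 0 := by rw [h0]; simp
        rw [hy i0] at h1
        have hl1 : lam * x i0 = 1 := inv_mul_cancel₀ hi0
        rw [← map_mul, hl1, map_one] at h1
        exact h2L (by rw [← h1]; norm_num)
      · apply hinj
        rw [map_zero, halg]
        have harg : (fun i => φ (y i)) = fun i => lam * x i + σ lam * σ (x i) :=
          funext fun i => hy i
        rw [harg, hexp, ha, hb, hc, hd0]
        ring
    · -- the third intersection point -c x + b σ x
      have hc : c ≠ 0 := fun h => hb (by rw [← hσc, h, map_zero])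
      set p : Fin 5 → L := fun i => -c * x i + b * σ (x i) with hp
      have hpne : ∃ i, p i ≠ 0 := by
        by_contra h
        push_neg at h
        obtain ⟨i, hi⟩ := hA (c / b)
        apply hi
        have h0 := h i
        rw [hp] at h0
        field_simp
        have : b * σ (x i) = c * x i := by linear_combination h0
        linear_combination this
      have hσp : ∀ i, σ (p i) = - p i := by
        intro i
        rw [hp]
        simp only []
        rw [map_add, map_mul, map_mul, map_neg, hσc, hσb, hσσ]
        ring
      have hfixz : ∀ i, σ (δ * p i) = δ * p i := by
        intro i
        rw [map_mul, hδσ, hσp]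
        ring
      choose y hy using fun i => hfix _ (hfixz i)
      obtain ⟨ip, hip⟩ := hpne
      refine ⟨y, ?_, ?_⟩
      · intro h0
        have h1 : φ (y ip) = 0 := by rw [h0]; simp
        rw [hy ip] at h1
        exact (mul_ne_zero hδ0 hip) h1
      · apply hinj
        rw [map_zero, halg]
        have harg : (fun i => φ (y i)) = fun i => (δ * -c) * x i + (δ * b) * σ (x i) :=
          funext fun i => by rw [hy i, hp]; ring
        rw [harg, hexp, ha, hd0]
        ring
end

section
/- Let k be a field of characteristic ≠ 2 and X ⊂ P⁴ a cubic hypersurface defined over k. If L/k is a finite extension obtained as a tower of quadratic extensions and X has an L-point, then X has a k-point. -/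
open MvPolynomial

open scoped Polynomial

set_option linter.unusedVariables false

lemma map_eval' {R S σ : Type*} [CommSemiring R] [CommSemiring S] (f : R →+* S)
    (v : σ → R) (p : MvPolynomial σ R) :
    f (MvPolynomial.eval v p) = MvPolynomial.eval (f ∘ v) (MvPolynomial.map f p) := by
  rw [MvPolynomial.eval_map]
  simpa using MvPolynomial.eval₂_comp_left f (RingHom.id R) v p

lemma coeff_prod_of_natDegree_le' {R ι : Type*} [CommSemiring R] (s : Finset ι)
    (f : ι → R[X]) (n : ι → ℕ) (h : ∀ i ∈ s, (f i).natDegree ≤ n i) :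
    (∏ i ∈ s, f i).coeff (∑ i ∈ s, n i) = ∏ i ∈ s, (f i).coeff (n i) := by
  classical
  induction s using Finset.induction_on with
  | empty => simp
  | insert _ _ hia ih =>
    rename_i a s
    rw [Finset.prod_insert hia, Finset.sum_insert hia, Finset.prod_insert hia]
    rw [Polynomial.coeff_mul_add_eq_of_natDegree_le (h a (Finset.mem_insert_self a s))
      ((Polynomial.natDegree_prod_le _ _).trans (Finset.sum_le_sum
        (fun i hi => h i (Finset.mem_insert_of_mem hi))))]
    rw [ih (fun i hi => h i (Finset.mem_insert_of_mem hi))]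

lemma eval_mul_homog {S σ : Type*} [CommSemiring S] [Fintype σ] {n : ℕ}
    (p : MvPolynomial σ S) (hp : p.IsHomogeneous n) (u : S) (w : σ → S) :
    MvPolynomial.eval (fun i => u * w i) p = u ^ n * MvPolynomial.eval w p := by
  rw [MvPolynomial.eval_eq', MvPolynomial.eval_eq', Finset.mul_sum]
  apply Finset.sum_congr rfl
  intro d hd
  have hdeg : d.degree = n := by
    by_contra h
    exact (MvPolynomial.mem_support_iff.1 hd) (hp.coeff_eq_zero h)
  have hsum : ∑ i, d i = n := by
    rw [← hdeg]
    exact (Finset.sum_subset (Finset.subset_univ d.support)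
      (fun i _ hi => Finsupp.notMem_support_iff.1 hi)).symm
  calc MvPolynomial.coeff d p * ∏ i, (u * w i) ^ d i
      = MvPolynomial.coeff d p * ((∏ i, u ^ d i) * ∏ i, w i ^ d i) := by
        rw [← Finset.prod_mul_distrib]; simp [mul_pow]
    _ = u ^ n * (MvPolynomial.coeff d p * ∏ i, w i ^ d i) := by
        rw [Finset.prod_pow_eq_pow_sum, hsum]; ring

lemma aeval_line {E A : Type*} [CommSemiring E] [CommSemiring A] [Algebra E A]
    (a b : Fin 5 → E) (G : MvPolynomial (Fin 5) E) (s : A) :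
    Polynomial.aeval s (MvPolynomial.aeval
        (fun i => Polynomial.C (a i) + Polynomial.X * Polynomial.C (b i)) G) =
      MvPolynomial.aeval (fun i => algebraMap E A (a i) + s * algebraMap E A (b i)) G := by
  rw [MvPolynomial.comp_aeval_apply]
  have : (fun i => Polynomial.aeval s (Polynomial.C (a i) + Polynomial.X * Polynomial.C (b i)))
      = fun i => algebraMap E A (a i) + s * algebraMap E A (b i) := by
    funext i
    simp only [map_add, map_mul, Polynomial.aeval_C, Polynomial.aeval_X]
  rw [this]

lemma quadratic_descent {E F : Type*} [Field E] [Field F] [Algebra E F]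
    (hrank : Module.finrank E F = 2)
    (G : MvPolynomial (Fin 5) E) (hG : G.IsHomogeneous 3)
    (x : Fin 5 → F) (hx : x ≠ 0)
    (hxG : MvPolynomial.eval x (MvPolynomial.map (algebraMap E F) G) = 0) :
    ∃ y : Fin 5 → E, y ≠ 0 ∧ MvPolynomial.eval y G = 0 := by
  classical
  have injEF : Function.Injective (algebraMap E F) := (algebraMap E F).injective
  haveI : FiniteDimensional E F := Module.finite_of_finrank_eq_succ (by rw [hrank])
  -- find θ not in the image of E
  obtain ⟨θ, hθ⟩ : ∃ θ : F, θ ∉ (algebraMap E F).range := by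
    by_contra h
    push_neg at h
    have h1 : Module.finrank E F ≤ 1 := by
      apply finrank_le_one (1 : F)
      intro w
      obtain ⟨c, hc⟩ := h w
      exact ⟨c, by rw [Algebra.smul_def, mul_one, hc]⟩
    omega
  -- basis 1, θ
  have li : LinearIndependent E ![1, θ] := by
    rw [LinearIndependent.pair_iff]
    intro s t hst
    by_cases ht : t = 0
    · subst ht
      simp only [zero_smul, add_zero, smul_eq_zero] at hst
      exact ⟨hst.resolve_right one_ne_zero, rfl⟩
    · exfalso
      apply hθ
      refine ⟨-s / t, ?_⟩
      rw [Algebra.smul_def, mul_one, Algebra.smul_def] at hst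
      have ht' : algebraMap E F t ≠ 0 := fun h => ht (injEF (by simpa using h))
      rw [map_div₀, map_neg, div_eq_iff ht']
      linear_combination -hst
  let B : Module.Basis (Fin 2) E F := basisOfLinearIndependentOfCardEqFinrank li (by simp [hrank])
  have hB : ∀ j, B j = ![1, θ] j := fun j => by
    rw [coe_basisOfLinearIndependentOfCardEqFinrank]
  set a : Fin 5 → E := fun i => B.repr (x i) 0 with ha
  set b : Fin 5 → E := fun i => B.repr (x i) 1 with hb
  have hab : ∀ i, x i = algebraMap E F (a i) + θ * algebraMap E F (b i) := by
    intro i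
    have := B.sum_repr (x i)
    rw [Fin.sum_univ_two, hB 0, hB 1] at this
    simp only [Matrix.cons_val_zero, Matrix.cons_val_one, Matrix.head_cons] at this
    rw [← this, Algebra.smul_def, Algebra.smul_def, mul_one, mul_comm]
  -- the restriction of G to the line through a and b
  set v : Fin 5 → Polynomial E := fun i => Polynomial.C (a i) + Polynomial.X * Polynomial.C (b i)
    with hv
  set g : Polynomial E := MvPolynomial.aeval v G with hg
  -- evaluation at elements of E
  have hevalE : ∀ t : E,
      Polynomial.eval t g = MvPolynomial.eval (fun i => a i + t * b i) G := by
    intro t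
    have h1 := aeval_line a b G t
    rw [Polynomial.coe_aeval_eq_eval] at h1
    rw [hg, h1]
    have h2 : (fun i => algebraMap E E (a i) + t * algebraMap E E (b i))
        = fun i => a i + t * b i := by funext i; simp
    rw [h2, ← MvPolynomial.coe_aeval_eq_eval]
    rfl
  -- θ is a root of g
  have hgθ : Polynomial.aeval θ g = 0 := by
    rw [hg, aeval_line a b G θ, MvPolynomial.aeval_def, ← MvPolynomial.eval_map]
    have hxx : (fun i => algebraMap E F (a i) + θ * algebraMap E F (b i)) = x :=
      funext fun i => (hab i).symm
    rw [hxx]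
    exact hxG
  -- expansion of g as a sum over the support of G
  have hgsum : g = ∑ d ∈ G.support,
      Polynomial.C (MvPolynomial.coeff d G) * ∏ i, v i ^ d i := by
    rw [hg, MvPolynomial.aeval_def, MvPolynomial.eval₂_eq']
    simp [Polynomial.algebraMap_eq]
  have hd3 : ∀ d ∈ G.support, ∑ i, d i = 3 := by
    intro d hd
    have hdeg : d.degree = 3 := by
      by_contra hcon
      exact (MvPolynomial.mem_support_iff.1 hd) (hG.coeff_eq_zero hcon)
    rw [← hdeg]
    exact (Finset.sum_subset (Finset.subset_univ d.support)
      (fun i _ hi => Finsupp.notMem_support_iff.1 hi)).symm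
  have hvdeg : ∀ i, (v i).natDegree ≤ 1 := by
    intro i
    apply (Polynomial.natDegree_add_le _ _).trans
    simp only [Polynomial.natDegree_C, max_le_iff]
    constructor
    · omega
    · exact (Polynomial.natDegree_mul_le).trans (by simp)
  have hpowdeg : ∀ (d : Fin 5 →₀ ℕ) (i : Fin 5), ((v i) ^ (d i)).natDegree ≤ d i := by
    intro d i
    exact (Polynomial.natDegree_pow_le).trans
      (by calc d i * (v i).natDegree ≤ d i * 1 := Nat.mul_le_mul_left _ (hvdeg i)
          _ = d i := Nat.mul_one _)
  have hgdeg : g.natDegree ≤ 3 := by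
    rw [hgsum]
    apply Polynomial.natDegree_sum_le_of_forall_le
    intro d hd
    apply (Polynomial.natDegree_mul_le).trans
    rw [Polynomial.natDegree_C, zero_add]
    apply (Polynomial.natDegree_prod_le _ _).trans
    rw [← hd3 d hd]
    exact Finset.sum_le_sum fun i _ => hpowdeg d i
  have hvcoeff : ∀ i, (v i).coeff 1 = b i := by
    intro i
    rw [hv]
    simp [Polynomial.coeff_add, Polynomial.coeff_C]
  have hgcoeff : g.coeff 3 = MvPolynomial.eval b G := by
    rw [hgsum, Polynomial.finset_sum_coeff, MvPolynomial.eval_eq']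
    apply Finset.sum_congr rfl
    intro d hd
    rw [Polynomial.coeff_C_mul]
    congr 1
    have h3 : (3 : ℕ) = ∑ i, d i := (hd3 d hd).symm
    rw [h3, coeff_prod_of_natDegree_le' _ _ _ (fun i _ => hpowdeg d i)]
    apply Finset.prod_congr rfl
    intro i _
    have := Polynomial.coeff_pow_of_natDegree_le (p := v i) (n := 1) (m := d i) (hvdeg i)
    rw [mul_one] at this
    rw [this, hvcoeff i]
  -- minimal polynomial of θ
  have hθint : IsIntegral E θ := IsIntegral.of_finite E θ
  set μ : Polynomial E := minpoly E θ with hμ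
  have hμ0 : μ ≠ 0 := minpoly.ne_zero hθint
  have hμdeg : μ.natDegree = 2 := by
    have h1 : μ.natDegree ∣ 2 := hrank ▸ minpoly.degree_dvd hθint
    have h2 : 2 ≤ μ.natDegree := (minpoly.two_le_natDegree_iff hθint).2 hθ
    exact le_antisymm (Nat.le_of_dvd two_pos h1) h2
  obtain ⟨h, hgh⟩ : μ ∣ g := minpoly.dvd E θ hgθ
  -- case analysis
  by_cases hb0 : b = 0
  · -- all coordinates of x lie in E
    have hxa : ∀ i, x i = algebraMap E F (a i) := by
      intro i; rw [hab i, hb0]; simp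
    refine ⟨a, ?_, ?_⟩
    · intro h0
      apply hx
      funext i
      rw [hxa i, congrFun h0 i]
      simp
    · apply injEF
      rw [map_zero, map_eval', show (algebraMap E F) ∘ a = x from funext fun i => (hxa i).symm]
      exact hxG
  · have hdh : h.natDegree ≤ 1 := by
      by_cases hh0 : h = 0
      · simp [hh0]
      · have h1 := Polynomial.natDegree_mul hμ0 hh0
        rw [← hgh, hμdeg] at h1
        omega
    by_cases hc1 : h.coeff 1 = 0
    · -- then g has degree ≤ 2, so eval b G = g.coeff 3 = 0
      have hh : h = Polynomial.C (h.coeff 0) := by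
        have h1 := Polynomial.eq_X_add_C_of_natDegree_le_one hdh
        rw [hc1] at h1
        simpa using h1
      have h2 : g.natDegree ≤ 2 := by
        rw [hgh, hh]
        apply (Polynomial.natDegree_mul_le).trans
        simp [hμdeg]
      have h3 : g.coeff 3 = 0 := Polynomial.coeff_eq_zero_of_natDegree_lt (by omega)
      exact ⟨b, hb0, by rw [← hgcoeff, h3]⟩
    · -- the residual linear factor has a root t0 in E
      set t0 : E := -h.coeff 0 / h.coeff 1 with ht0
      have hht0 : h.eval t0 = 0 := by
        have hh := Polynomial.eq_X_add_C_of_natDegree_le_one hdh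
        nth_rewrite 1 [hh]
        simp only [Polynomial.eval_add, Polynomial.eval_mul, Polynomial.eval_C,
          Polynomial.eval_X, ht0]
        field_simp
        ring
      have hgt0 : Polynomial.eval t0 g = 0 := by
        rw [hgh, Polynomial.eval_mul, hht0, mul_zero]
      set y : Fin 5 → E := fun i => a i + t0 * b i with hy
      have hyG : MvPolynomial.eval y G = 0 := by
        rw [hy, ← hevalE t0]; exact hgt0
      by_cases hy0 : y = 0
      · -- degenerate case: x is proportional to b
        have hxi : ∀ i, x i = (θ - algebraMap E F t0) * algebraMap E F (b i) := by
          intro i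
          have hai : a i = -(t0 * b i) := by
            have h1 := congrFun hy0 i
            simp only [hy, Pi.zero_apply] at h1
            linear_combination h1
          rw [hab i, hai, map_neg, map_mul]
          ring
        have hu : θ - algebraMap E F t0 ≠ 0 := by
          intro h0
          exact hθ ⟨t0, by linear_combination -h0⟩
        have hbF : MvPolynomial.eval ((algebraMap E F) ∘ b)
            (MvPolynomial.map (algebraMap E F) G) = 0 := by
          have h1 := eval_mul_homog _ (hG.map (algebraMap E F))
            (θ - algebraMap E F t0) ((algebraMap E F) ∘ b)
          rw [show (fun i => (θ - algebraMap E F t0) * (((algebraMap E F) ∘ b) i)) = x from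
            funext fun i => (hxi i).symm, hxG] at h1
          exact ((mul_eq_zero.1 h1.symm).resolve_left (pow_ne_zero _ hu))
        refine ⟨b, hb0, injEF ?_⟩
        rw [map_zero, map_eval']
        exact hbF
      · exact ⟨y, hy0, hyG⟩

/-- If a cubic hypersurface in P⁴ over a field `k` of characteristic ≠ 2 has a
point over a finite extension `L/k` that is a tower of quadratic extensions,
then it has a `k`-point. -/
theorem cubic_point_descends_quadratic_tower (k L : Type*) [Field k] [Field L]
    [Algebra k L] (hchar : ringChar k ≠ 2)
    (n : ℕ) (K : Fin (n + 1) → IntermediateField k L)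
    (h0 : K 0 = ⊥) (hlast : K (Fin.last n) = ⊤)
    (hle : ∀ i : Fin n, K i.castSucc ≤ K i.succ)
    (hdeg : ∀ i : Fin n,
      Subfield.relfinrank (K i.castSucc).toSubfield (K i.succ).toSubfield = 2)
    (F : MvPolynomial (Fin 5) k) (hF : F.IsHomogeneous 3)
    (x : Fin 5 → L) (hx : x ≠ 0)
    (hxF : eval x (MvPolynomial.map (algebraMap k L) F) = 0) :
    ∃ y : Fin 5 → k, y ≠ 0 ∧ eval y F = 0 := by
  have key : ∀ i : Fin (n + 1), ∃ z : Fin 5 → L, z ≠ 0 ∧ (∀ j, z j ∈ K i) ∧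
      MvPolynomial.eval z (MvPolynomial.map (algebraMap k L) F) = 0 := by
    intro i
    induction i using Fin.reverseInduction with
    | last => exact ⟨x, hx, fun j => hlast ▸ IntermediateField.mem_top, hxF⟩
    | cast i ih =>
      obtain ⟨z, hz0, hzmem, hzF⟩ := ih
      set E : IntermediateField k L := K i.castSucc with hE
      set F' : IntermediateField E L := IntermediateField.extendScalars (hle i) with hF'
      have hrank : Module.finrank E F' = 2 := by
        rw [← IntermediateField.relfinrank_eq_finrank_of_le (hle i)]
        exact hdeg i
      set G : MvPolynomial (Fin 5) E := MvPolynomial.map (algebraMap k E) F with hG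
      have hGhom : G.IsHomogeneous 3 := hF.map _
      set x' : Fin 5 → F' := fun j =>
        ⟨z j, (IntermediateField.mem_extendScalars (hle i)).2 (hzmem j)⟩ with hx'
      have hx'0 : x' ≠ 0 := by
        intro hcon
        apply hz0
        funext j
        have := congrFun hcon j
        rw [hx'] at this
        simpa [Subtype.ext_iff] using this
      have hcomp : (((algebraMap F' L).comp (algebraMap E F')).comp (algebraMap k E))
          = algebraMap k L := by
        ext c
        rw [RingHom.comp_apply, RingHom.comp_apply, ← IsScalarTower.algebraMap_apply E F' L,
          ← IsScalarTower.algebraMap_apply k E L]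
      have hx'G : MvPolynomial.eval x' (MvPolynomial.map (algebraMap E F') G) = 0 := by
        apply (algebraMap F' L).injective
        rw [map_zero, map_eval', hG, MvPolynomial.map_map, MvPolynomial.map_map, hcomp]
        have : (algebraMap F' L) ∘ x' = z := by
          funext j
          rfl
        rw [this]
        exact hzF
      obtain ⟨y, hy0, hyG⟩ := quadratic_descent hrank G hGhom x' hx'0 hx'G
      refine ⟨fun j => (y j : L), ?_, fun j => (y j).2, ?_⟩
      · intro hcon
        apply hy0
        funext j
        have h1 : (y j : L) = 0 := congrFun hcon j
        show y j = 0
        exact Subtype.ext h1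
      · have hcomp2 : (algebraMap E L).comp (algebraMap k E) = algebraMap k L :=
          (IsScalarTower.algebraMap_eq k E L).symm
        have : (fun j => (y j : L)) = (algebraMap E L) ∘ y := by
          funext j
          rfl
        rw [this, ← hcomp2, ← MvPolynomial.map_map, ← hG, ← map_eval', hyG, map_zero]
  obtain ⟨z, hz0, hzmem, hzF⟩ := key 0
  rw [h0] at hzmem
  have hzmem' : ∀ j, ∃ c : k, algebraMap k L c = z j := by
    intro j
    exact (IntermediateField.mem_bot).1 (hzmem j)
  choose y hy using hzmem'
  refine ⟨y, ?_, ?_⟩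
  · intro hcon
    apply hz0
    funext j
    rw [← hy j, congrFun hcon j]
    simp
  · apply (algebraMap k L).injective
    rw [map_zero, map_eval', show (algebraMap k L) ∘ y = z from funext fun j => hy j]
    exact hzF
end

section
/- Let F ≤ S₆ be a subgroup containing a point-stabilizer copy of A₅ (i.e., a subgroup isomorphic to A₅ fixing one of the six letters). Then F is isomorphic to one of A₅, S₅, A₆, or S₆. -/
open Equiv Equiv.Perm

/-- `Equiv.permCongr` as a `MulEquiv`. -/
def A5aux.permMulEquiv {α β : Type*} (e : α ≃ β) : Equiv.Perm α ≃* Equiv.Perm β where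
  toEquiv := e.permCongr
  map_mul' p q := by
    ext b
    simp [Equiv.permCongr_apply, Equiv.Perm.mul_apply]

private lemma A5aux.stab_iff (a : Fin 6) (g : Equiv.Perm (Fin 6)) (hg : g a = a) (x : Fin 6) :
    x ≠ a ↔ g x ≠ a := by
  constructor
  · intro hx h
    exact hx (g.injective (by rw [h, hg]))
  · intro h hx
    exact h (by rw [hx, hg])

/-- The stabilizer of a point is isomorphic to the permutation group of the complement. -/
noncomputable def A5aux.stabIso (a : Fin 6) :
    MulAction.stabilizer (Equiv.Perm (Fin 6)) a ≃* Equiv.Perm {x : Fin 6 // x ≠ a} where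
  toFun g := (g : Equiv.Perm (Fin 6)).subtypePerm (fun x => (A5aux.stab_iff a g g.2 x).symm)
  invFun σ := ⟨Equiv.Perm.ofSubtype σ, by
    show Equiv.Perm.ofSubtype σ a = a
    exact Equiv.Perm.ofSubtype_apply_of_not_mem σ (by simp)⟩
  left_inv g := Subtype.ext (Equiv.Perm.ofSubtype_subtypePerm _
    (fun x hx hxa => hx (by rw [hxa]; exact g.2)))
  right_inv σ := Equiv.Perm.subtypePerm_ofSubtype σ
  map_mul' g h := by
    apply Equiv.ext
    intro x
    apply Subtype.ext
    simp [Equiv.Perm.mul_apply]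
    rfl

private lemma A5aux.fix_unique (A : Subgroup (Equiv.Perm (Fin 6))) (hA : 30 ≤ Nat.card A)
    (a b : Fin 6) (hab : a ≠ b) (ha : ∀ g ∈ A, g a = a) (hb : ∀ g ∈ A, g b = b) : False := by
  classical
  set p : Fin 6 → Prop := fun x => x ≠ a ∧ x ≠ b with hp
  have key : ∀ g : A, ∀ x, p x ↔ p ((g : Equiv.Perm (Fin 6)) x) := by
    intro g x
    constructor
    · rintro ⟨h1, h2⟩
      exact ⟨(A5aux.stab_iff a g (ha g g.2) x).mp h1, (A5aux.stab_iff b g (hb g g.2) x).mp h2⟩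
    · rintro ⟨h1, h2⟩
      exact ⟨(A5aux.stab_iff a g (ha g g.2) x).mpr h1, (A5aux.stab_iff b g (hb g g.2) x).mpr h2⟩
  set φ : A → Equiv.Perm {x : Fin 6 // p x} :=
    fun g => (g : Equiv.Perm (Fin 6)).subtypePerm (fun x => (key g x).symm) with hφ
  have hinj : Function.Injective φ := by
    intro g g' hgg'
    apply Subtype.ext
    apply Equiv.ext
    intro x
    by_cases hx : p x
    · exact congrArg (fun σ => ((σ ⟨x, hx⟩ : {x : Fin 6 // p x}) : Fin 6)) hgg'
    · rcases not_and_or.mp hx with hxa | hxb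
      · rw [not_not.mp hxa, ha g g.2, ha g' g'.2]
      · rw [not_not.mp hxb, hb g g.2, hb g' g'.2]
  have hle : Nat.card A ≤ Nat.card (Equiv.Perm {x : Fin 6 // p x}) :=
    Nat.card_le_card_of_injective φ hinj
  have hcard4 : Fintype.card {x : Fin 6 // p x} = 4 := by
    have h1 : Fintype.card {x : Fin 6 // p x} =
        Fintype.card {x : Fin 6 // x ∈ ({a, b} : Finset (Fin 6))ᶜ} := by
      apply Fintype.card_congr
      apply Equiv.subtypeEquivRight
      intro x
      simp [hp, Finset.mem_compl, Finset.mem_insert, not_or]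
    rw [h1, Fintype.card_coe, Finset.card_compl,
      Finset.card_insert_of_notMem (by simpa using hab), Finset.card_singleton]
    rfl
  have hcard : Nat.card (Equiv.Perm {x : Fin 6 // p x}) = 24 := by
    rw [Nat.card_eq_fintype_card, Fintype.card_perm, hcard4]
    rfl
  omega

private lemma A5aux.fix_of_normalizes (A : Subgroup (Equiv.Perm (Fin 6)))
    (hA : 30 ≤ Nat.card A) (a : Fin 6) (ha : ∀ g ∈ A, g a = a)
    (f : Equiv.Perm (Fin 6)) (hf : ∀ g ∈ A, f⁻¹ * g * f ∈ A) : f a = a := by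
  by_contra hne
  refine A5aux.fix_unique A hA a (f a) (fun h => hne h.symm) ha ?_
  intro g hg
  have h2 : (f⁻¹ * g * f) a = a := ha _ (hf g hg)
  have := congrArg f h2
  simpa [Equiv.Perm.mul_apply] using this

private lemma A5aux.eq_of_normalized (F A K : Subgroup (Equiv.Perm (Fin 6)))
    (hAF : A ≤ F) (e : A ≃* alternatingGroup (Fin 5)) (hKA : K ≤ A)
    (hK : 1 < Nat.card K)
    (hconj : ∀ f ∈ F, ∀ x ∈ K, f * x * f⁻¹ ∈ K) : K = A := by
  haveI : Nontrivial A := e.toEquiv.nontrivial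
  haveI : IsSimpleGroup A :=
    IsSimpleGroup.isSimpleGroup_of_surjective e.symm.toMonoidHom e.symm.surjective
  have hnormal : (K.subgroupOf A).Normal := by
    constructor
    intro n hn g
    rw [Subgroup.mem_subgroupOf] at hn ⊢
    exact hconj (g : Equiv.Perm (Fin 6)) (hAF g.2) (n : Equiv.Perm (Fin 6)) hn
  rcases hnormal.eq_bot_or_eq_top with hbot | htop
  · exfalso
    have hcard : Nat.card (K.subgroupOf A) = Nat.card K :=
      Nat.card_congr (Subgroup.subgroupOfEquivOfLe hKA).toEquiv
    rw [hbot, Subgroup.card_bot] at hcard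
    omega
  · exact le_antisymm hKA (Subgroup.subgroupOf_eq_top.mp htop)

private lemma A5aux.card_A5 : Nat.card (alternatingGroup (Fin 5)) = 60 := by
  have h := two_mul_card_alternatingGroup (α := Fin 5)
  rw [Fintype.card_perm, Fintype.card_fin] at h
  rw [Nat.card_eq_fintype_card]
  have : Nat.factorial 5 = 120 := rfl
  omega

private lemma A5aux.card_A6 : Nat.card (alternatingGroup (Fin 6)) = 360 := by
  have h := two_mul_card_alternatingGroup (α := Fin 6)
  rw [Fintype.card_perm, Fintype.card_fin] at h
  rw [Nat.card_eq_fintype_card]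
  have : Nat.factorial 6 = 720 := rfl
  omega

private lemma A5aux.card_S6 : Nat.card (Equiv.Perm (Fin 6)) = 720 := by
  rw [Nat.card_eq_fintype_card, Fintype.card_perm, Fintype.card_fin]
  rfl

private lemma A5aux.card_stab (a : Fin 6) :
    Nat.card (MulAction.stabilizer (Equiv.Perm (Fin 6)) a) = 120 := by
  classical
  rw [Nat.card_congr (A5aux.stabIso a).toEquiv, Nat.card_eq_fintype_card, Fintype.card_perm]
  have h5 : Fintype.card {x : Fin 6 // x ≠ a} = 5 := by
    rw [Fintype.card_subtype_compl, Fintype.card_subtype_eq, Fintype.card_fin]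
  rw [h5]
  rfl

/-- The key step: if `60 < |F| ≤ 240` then `A` is normal in `F` and `F` fixes `a`. -/
private lemma A5aux.le_stab (F A : Subgroup (Equiv.Perm (Fin 6))) (hAF : A ≤ F)
    (e : A ≃* alternatingGroup (Fin 5)) (hA : Nat.card A = 60)
    (a : Fin 6) (hfix : ∀ g ∈ A, g a = a)
    (hF1 : 120 ≤ Nat.card F) (hF2 : Nat.card F ≤ 240) :
    F ≤ MulAction.stabilizer (Equiv.Perm (Fin 6)) a := by
  classical
  set H := A.subgroupOf F with hH
  have hHcard : Nat.card H = 60 := by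
    rw [← hA]
    exact Nat.card_congr (Subgroup.subgroupOfEquivOfLe hAF).toEquiv
  have hidx : H.index * 60 = Nat.card F := by
    rw [← hHcard]; exact H.index_mul_card
  have hidx4 : H.index ≤ 4 := by omega
  set φ := MulAction.toPermHom F (F ⧸ H) with hφ
  have hker_le : φ.ker ≤ H := H.normalCore_eq_ker ▸ H.normalCore_le
  have hkeridx : φ.ker.index ≤ 24 := by
    rw [Subgroup.index_ker]
    have h1 : Nat.card φ.range ≤ Nat.card (Equiv.Perm (F ⧸ H)) :=
      Subgroup.card_le_card_group _
    haveI : Fintype (F ⧸ H) := Fintype.ofFinite _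
    have h2 : Nat.card (Equiv.Perm (F ⧸ H)) = (Nat.card (F ⧸ H)).factorial := by
      rw [Nat.card_eq_fintype_card, Fintype.card_perm, Nat.card_eq_fintype_card]
    have h3 : Nat.card (F ⧸ H) = H.index := H.index_eq_card.symm
    rw [h3] at h2
    have h4 : (H.index).factorial ≤ Nat.factorial 4 := Nat.factorial_le hidx4
    have h5 : Nat.factorial 4 = 24 := rfl
    omega
  have hkermul : Nat.card φ.ker * φ.ker.index = Nat.card F := φ.ker.card_mul_index
  have hkerpos : 0 < Nat.card φ.ker := Nat.card_pos
  have hker1 : 1 < Nat.card φ.ker := by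
    rcases Nat.lt_or_ge 1 (Nat.card φ.ker) with h | h
    · exact h
    · exfalso
      have : Nat.card φ.ker = 1 := le_antisymm h hkerpos
      rw [this, one_mul] at hkermul
      omega
  set K := φ.ker.map F.subtype with hK
  have hKA : K ≤ A := by
    rintro x hx
    rw [hK, Subgroup.mem_map] at hx
    obtain ⟨y, hy, rfl⟩ := hx
    exact (Subgroup.mem_subgroupOf).mp (hker_le hy)
  have hKcard : Nat.card K = Nat.card φ.ker :=
    (Nat.card_congr (Subgroup.equivMapOfInjective _ _ F.subtype_injective).toEquiv).symm
  have hconjK : ∀ f ∈ F, ∀ x ∈ K, f * x * f⁻¹ ∈ K := by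
    intro f hf x hx
    rw [hK, Subgroup.mem_map] at hx
    obtain ⟨y, hy, rfl⟩ := hx
    refine Subgroup.mem_map.mpr ⟨⟨f, hf⟩ * y * ⟨f, hf⟩⁻¹, ?_, rfl⟩
    exact (MonoidHom.normal_ker φ).conj_mem y hy ⟨f, hf⟩
  have hKeq : K = A := A5aux.eq_of_normalized F A K hAF e hKA (by omega) hconjK
  intro f hf
  rw [MulAction.mem_stabilizer_iff]
  show f a = a
  apply A5aux.fix_of_normalizes A (by omega) a hfix
  intro g hg
  rw [← hKeq] at hg ⊢
  have := hconjK f⁻¹ (inv_mem hf) g hg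
  simpa using this

/-- A subgroup of S₆ containing a point-stabilizing copy of A₅ is isomorphic to
A₅, S₅, A₆ or S₆. -/
theorem overgroups_of_standard_A5 (F : Subgroup (Equiv.Perm (Fin 6)))
    (h : ∃ (a : Fin 6) (A : Subgroup (Equiv.Perm (Fin 6))), A ≤ F ∧
      Nonempty (A ≃* alternatingGroup (Fin 5)) ∧ ∀ g ∈ A, g a = a) :
    Nonempty (F ≃* alternatingGroup (Fin 5)) ∨ Nonempty (F ≃* Equiv.Perm (Fin 5)) ∨
      Nonempty (F ≃* alternatingGroup (Fin 6)) ∨ Nonempty (F ≃* Equiv.Perm (Fin 6)) := by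
  classical
  obtain ⟨a, A, hAF, ⟨e⟩, hfix⟩ := h
  have hA60 : Nat.card A = 60 := by
    rw [Nat.card_congr e.toEquiv, A5aux.card_A5]
  have hdvd : Nat.card A ∣ Nat.card F := Subgroup.card_dvd_of_le hAF
  have hFdvd : Nat.card F ∣ 720 := by
    rw [← A5aux.card_S6]
    exact F.card_subgroup_dvd_card
  rw [hA60] at hdvd
  obtain ⟨k, hk⟩ := hdvd
  have hk12 : k ∣ 12 := by
    have h720 : (720 : ℕ) = 60 * 12 := by norm_num
    rw [hk, h720] at hFdvd
    exact (mul_dvd_mul_iff_left (by norm_num : (60 : ℕ) ≠ 0)).mp hFdvd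
  have hkmem : k ∈ Nat.divisors 12 := Nat.mem_divisors.mpr ⟨hk12, by norm_num⟩
  fin_cases hkmem
  · -- |F| = 60 : F = A
    left
    have hcF : Nat.card F = 60 := by rw [hk]
    have hFA : A = F := Subgroup.eq_of_le_of_card_ge hAF (by omega)
    exact ⟨(MulEquiv.subgroupCongr hFA.symm).trans e⟩
  · -- |F| = 120 : F = Stab(a) ≅ S₅
    right; left
    have hcF : Nat.card F = 120 := by rw [hk]
    have hle := A5aux.le_stab F A hAF e hA60 a hfix (by omega) (by omega)
    have hFS : F = MulAction.stabilizer (Equiv.Perm (Fin 6)) a :=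
      Subgroup.eq_of_le_of_card_ge hle (by rw [A5aux.card_stab]; omega)
    have h5 : Fintype.card {x : Fin 6 // x ≠ a} = 5 := by
      rw [Fintype.card_subtype_compl, Fintype.card_subtype_eq, Fintype.card_fin]
    exact ⟨((MulEquiv.subgroupCongr hFS).trans (A5aux.stabIso a)).trans
      (A5aux.permMulEquiv (Fintype.equivFinOfCardEq h5))⟩
  · -- |F| = 180 : impossible
    exfalso
    have hcF : Nat.card F = 180 := by rw [hk]
    have hle := A5aux.le_stab F A hAF e hA60 a hfix (by omega) (by omega)
    have := Subgroup.card_le_of_le hle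
    rw [A5aux.card_stab] at this
    omega
  · -- |F| = 240 : impossible
    exfalso
    have hcF : Nat.card F = 240 := by rw [hk]
    have hle := A5aux.le_stab F A hAF e hA60 a hfix (by omega) (by omega)
    have := Subgroup.card_le_of_le hle
    rw [A5aux.card_stab] at this
    omega
  · -- |F| = 360 : F = A₆
    right; right; left
    have hcF : Nat.card F = 360 := by rw [hk]
    have hidx2 : F.index = 2 := by
      have := F.card_mul_index
      rw [A5aux.card_S6, hcF] at this
      omega
    have hA6le : alternatingGroup (Fin 6) ≤ F := by
      rw [← Equiv.Perm.closure_three_cycles_eq_alternating]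
      rw [Subgroup.closure_le]
      intro σ hσ
      have h3 : σ ^ 3 = 1 := by
        rw [← (hσ : Equiv.Perm.IsThreeCycle σ).orderOf]
        exact pow_orderOf_eq_one σ
      have hsq : σ⁻¹ ^ 2 = σ := by
        rw [inv_pow, inv_eq_iff_mul_eq_one, ← pow_succ]
        exact h3
      have := Subgroup.sq_mem_of_index_two hidx2 σ⁻¹
      rw [hsq] at this
      exact this
    have hFA6 : alternatingGroup (Fin 6) = F :=
      Subgroup.eq_of_le_of_card_ge hA6le (by rw [A5aux.card_A6]; omega)
    exact ⟨MulEquiv.subgroupCongr hFA6.symm⟩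
  · -- |F| = 720 : F = S₆
    right; right; right
    have hcF : Nat.card F = 720 := by rw [hk]
    have hFtop : F = ⊤ := F.eq_top_of_card_eq (by rw [hcF, A5aux.card_S6])
    exact ⟨(MulEquiv.subgroupCongr hFtop).trans Subgroup.topEquiv⟩
end
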